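/- (Theorem 3.3 (iii), sufficiency) Assume M(·) ≡ M ∈ ℝ^{n×n} and M̃(·) ≡ M̃ ∈ ℝ^{n×n} are constant, and define inductively A_1 = A, M_1 = M and A_{i+1} = A A_i + M_i, M_{i+1} = M A_i for i ≥ 1. If the finite collection of vectors {(B x, 0) : x ∈ ℝ^m} ∪ {(A_i B x, A_{i−1} B x) : 1 ≤ i ≤ 2n+1, x ∈ ℝ^m} (with A_0 := I_n) spans ℝ^n × ℝ^n (i.e., the block matrix [[B, A_1B, …, A_{2n+1}B],[0, B, …, A_{2n}B]] has rank 2n), then the controlled ODE with memory is memory-type null controllable with kernel M̃. -/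

import Mathlib

open MeasureTheory Matrix Set

/-- `y` is a solution on `[0,T]` of the controlled ODE with memory
`y'(t) = A y(t) + ∫_0^t M(t-s) y(s) ds + B u(t)`, `y(0) = y₀`,
in the integrated sense. -/
noncomputable def IsCtrlSol (T : ℝ) (n m : ℕ) (A : Matrix (Fin n) (Fin n) ℝ)
    (M : ℝ → Matrix (Fin n) (Fin n) ℝ) (B : Matrix (Fin n) (Fin m) ℝ)
    (u : ℝ → Fin m → ℝ) (y0 : Fin n → ℝ) (y : ℝ → Fin n → ℝ) : Prop :=
  ContinuousOn y (Set.Icc 0 T) ∧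
  ∀ t ∈ Set.Icc 0 T,
    y t = y0 + ∫ s in Set.Ioc 0 t,
      (A *ᵥ y s + (∫ r in Set.Ioc 0 s, (M (s - r)) *ᵥ y r) + B *ᵥ u s)

/-- `w` is a solution on `[0,T]` of the adjoint system
`w'(t) = -Aᵀ w(t) - ∫_t^T M(s-t)ᵀ w(s) ds + M̃(T-t)ᵀ z_T`, `w(T) = w_T`,
in the integrated sense. -/
noncomputable def IsAdjSol (T : ℝ) (n : ℕ) (A : Matrix (Fin n) (Fin n) ℝ)
    (M Mt : ℝ → Matrix (Fin n) (Fin n) ℝ)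
    (wT zT : Fin n → ℝ) (w : ℝ → Fin n → ℝ) : Prop :=
  ContinuousOn w (Set.Icc 0 T) ∧
  ∀ t ∈ Set.Icc 0 T,
    w t = wT + ∫ s in Set.Ioc t T,
      (Aᵀ *ᵥ w s + (∫ r in Set.Ioc s T, (M (r - s))ᵀ *ᵥ w r) - (Mt (T - s))ᵀ *ᵥ zT)

/-- Memory-type null controllability with kernel `Mt`. -/
noncomputable def MemNullCtrl (T : ℝ) (n m : ℕ) (A : Matrix (Fin n) (Fin n) ℝ)
    (M Mt : ℝ → Matrix (Fin n) (Fin n) ℝ) (B : Matrix (Fin n) (Fin m) ℝ) : Prop :=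
  ∀ y0 : Fin n → ℝ, ∃ (u : ℝ → Fin m → ℝ) (y : ℝ → Fin n → ℝ),
    MemLp u 2 (volume.restrict (Set.Ioc 0 T)) ∧
    IsCtrlSol T n m A M B u y0 y ∧
    y T = 0 ∧
    (∫ s in Set.Ioc 0 T, (Mt (T - s)) *ᵥ y s) = 0
/-- The sequences `A_{i+1}`, `M_{i+1}` of the paper for constant kernels: the value at
index `i : ℕ` corresponds to the subscript `i + 1`, so `amcSeq A M 0 = (A₁, M₁) = (A, M)`
and `amcSeq A M (i+1) = (A A_{i+1} + M_{i+1}, M A_{i+1})`. -/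
def amcSeq {n : ℕ} (A M : Matrix (Fin n) (Fin n) ℝ) :
    ℕ → Matrix (Fin n) (Fin n) ℝ × Matrix (Fin n) (Fin n) ℝ
  | 0 => (A, M)
  | i + 1 =>
    let p := amcSeq A M i
    (A * p.1 + p.2, M * p.1)

/-- `AmatC A M i = A_i`, with the convention `A₀ = Iₙ`. -/
def AmatC {n : ℕ} (A M : Matrix (Fin n) (Fin n) ℝ) : ℕ → Matrix (Fin n) (Fin n) ℝ
  | 0 => 1
  | i + 1 => (amcSeq A M i).1


set_option synthInstance.maxHeartbeats 1000000
set_option maxHeartbeats 1000000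
set_option linter.unusedSectionVars false

open NormedSpace

namespace MemProofAux

variable {ι : Type*} [Fintype ι] [DecidableEq ι]

noncomputable def matCLM : Matrix ι ι ℝ ≃ₐ[ℝ] ((ι → ℝ) →L[ℝ] (ι → ℝ)) :=
  (Matrix.toLinAlgEquiv').trans (Module.End.toContinuousLinearMap (𝕜 := ℝ) (ι → ℝ))

@[simp] lemma matCLM_apply (X : Matrix ι ι ℝ) (v : ι → ℝ) : matCLM X v = X *ᵥ v := rfl

lemma matCLM_exp (X : Matrix ι ι ℝ) : matCLM (exp X) = exp (matCLM X) := by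
  have h1 : exp X = ∑' k : ℕ, ((Nat.factorial k : ℝ)⁻¹) • X ^ k := by
    rw [exp_eq_tsum (𝕂 := ℝ)]
  have h2 : exp (matCLM X) = ∑' k : ℕ, ((Nat.factorial k : ℝ)⁻¹) • (matCLM X) ^ k := by
    rw [exp_eq_tsum (𝕂 := ℝ)]
  rw [h1, h2]
  have := (matCLM.toLinearEquiv.toContinuousLinearEquiv
      (E := Matrix ι ι ℝ)).map_tsum (L := SummationFilter.unconditional ℕ) (f := fun k : ℕ => ((Nat.factorial k : ℝ)⁻¹) • X ^ k)
  have hco : ∀ Y : Matrix ι ι ℝ, matCLM.toLinearEquiv.toContinuousLinearEquiv Y = matCLM Y :=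
    fun Y => rfl
  rw [hco] at this
  rw [this]
  have hsm : ∀ (c : ℝ) (Y : Matrix ι ι ℝ), matCLM (c • Y) = c • matCLM Y := fun c Y =>
    map_smul matCLM.toLinearMap c Y
  have hpw : ∀ (Y : Matrix ι ι ℝ) (k : ℕ), matCLM (Y ^ k) = (matCLM Y) ^ k := fun Y k =>
    map_pow matCLM Y k
  congr 1
  funext k
  rw [hco, hsm, hpw]

lemma hasDerivAt_expL {E : Type*} [NormedAddCommGroup E] [NormedSpace ℝ E] [CompleteSpace E]
    (L : E →L[ℝ] E) (t : ℝ) :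
    HasDerivAt (fun t : ℝ => exp (t • L)) (exp (t • L) * L) t :=
  hasDerivAt_exp_smul_const L t

lemma continuous_expL {E : Type*} [NormedAddCommGroup E] [NormedSpace ℝ E] [CompleteSpace E]
    (L : E →L[ℝ] E) : Continuous fun t : ℝ => exp (t • L) :=
  continuous_iff_continuousAt.2 fun t => (hasDerivAt_expL L t).continuousAt

lemma expL_add {E : Type*} [NormedAddCommGroup E] [NormedSpace ℝ E] [CompleteSpace E]
    (L : E →L[ℝ] E) (a b : ℝ) :
    exp ((a + b) • L) = exp (a • L) * exp (b • L) := by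
  rw [add_smul]
  exact NormedSpace.exp_add_of_commute_of_mem_ball (𝕂 := ℝ) (((Commute.refl L).smul_left a).smul_right b)
    ((expSeries_radius_eq_top ℝ (E →L[ℝ] E)).symm ▸ edist_lt_top _ _) ((expSeries_radius_eq_top ℝ (E →L[ℝ] E)).symm ▸ edist_lt_top _ _)

lemma expL_mul_expL_neg {E : Type*} [NormedAddCommGroup E] [NormedSpace ℝ E] [CompleteSpace E]
    (L : E →L[ℝ] E) (t : ℝ) : exp (t • L) * exp (-t • L) = 1 := by
  rw [← expL_add]
  simp [NormedSpace.exp_zero]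

lemma commute_expL {E : Type*} [NormedAddCommGroup E] [NormedSpace ℝ E] [CompleteSpace E]
    (L : E →L[ℝ] E) (t : ℝ) : Commute L (exp (t • L)) :=
  ((Commute.refl L).smul_right t).exp_right

lemma exp_matCLM_apply (X : Matrix ι ι ℝ) (c : ℝ) (w : ι → ℝ) :
    exp (c • matCLM X) w = exp (c • X) *ᵥ w := by
  have : (c : ℝ) • matCLM X = matCLM (c • X) := (map_smul matCLM.toLinearMap c X).symm
  rw [this, ← matCLM_exp, matCLM_apply]

section Sol

variable {E : Type*} [NormedAddCommGroup E] [NormedSpace ℝ E] [CompleteSpace E]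
variable (L : E →L[ℝ] E) (g : ℝ → E) (v0 : E)

/-- Mild solution of `X' = L X + g`, `X 0 = v0`. -/
noncomputable def solX (t : ℝ) : E :=
  exp (t • L) (v0 + ∫ s in (0:ℝ)..t, exp ((-s) • L) (g s))

variable {g}

lemma cont_integrand (hg : Continuous g) : Continuous fun s : ℝ => exp ((-s) • L) (g s) :=
  (((continuous_expL L).comp continuous_neg).clm_apply hg)

lemma solX_hasDerivAt (hg : Continuous g) (t : ℝ) :
    HasDerivAt (solX L g v0) (L (solX L g v0 t) + g t) t := by
  have hcont := cont_integrand L hg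
  have hG : HasDerivAt (fun t : ℝ => v0 + ∫ s in (0:ℝ)..t, exp ((-s) • L) (g s))
      (exp ((-t) • L) (g t)) t := by
    apply HasDerivAt.const_add
    exact intervalIntegral.integral_hasDerivAt_right (hcont.intervalIntegrable _ _)
      hcont.stronglyMeasurable.stronglyMeasurableAtFilter hcont.continuousAt
  have hF := hasDerivAt_expL L t
  have h := hF.clm_apply hG
  convert h using 1
  · rfl
  have e1 : (exp (t • L) * L) (v0 + ∫ s in (0:ℝ)..t, exp ((-s) • L) (g s))
      = (L * exp (t • L)) (v0 + ∫ s in (0:ℝ)..t, exp ((-s) • L) (g s)) := by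
    rw [(commute_expL L t).eq]
  have e2 : exp (t • L) (exp ((-t) • L) (g t))
      = (exp (t • L) * exp ((-t) • L)) (g t) := rfl
  rw [e1, e2, expL_mul_expL_neg]
  simp [solX, ContinuousLinearMap.mul_apply]

lemma solX_continuous (hg : Continuous g) : Continuous (solX L g v0) :=
  continuous_iff_continuousAt.2 fun t => (solX_hasDerivAt L v0 hg t).continuousAt

lemma solX_zero : solX L g v0 0 = v0 := by
  simp [solX, NormedSpace.exp_zero]

lemma solX_integral (hg : Continuous g) (t : ℝ) :
    solX L g v0 t = v0 + ∫ s in (0:ℝ)..t, (L (solX L g v0 s) + g s) := by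
  have hderiv : ∀ s ∈ uIcc 0 t, HasDerivAt (solX L g v0) (L (solX L g v0 s) + g s) s :=
    fun s _ => solX_hasDerivAt L v0 hg s
  have hcont : Continuous fun s => L (solX L g v0 s) + g s :=
    (L.continuous.comp (solX_continuous L v0 hg)).add hg
  have h := intervalIntegral.integral_eq_sub_of_hasDerivAt hderiv (hcont.intervalIntegrable 0 t)
  rw [h, solX_zero]
  abel

lemma solX_formula (hg : Continuous g) {t : ℝ} (ht : 0 ≤ t) :
    solX L g v0 t = exp (t • L) v0 + ∫ s in Set.Ioc 0 t, exp ((t - s) • L) (g s) := by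
  have hcont := cont_integrand L hg
  rw [solX, map_add]
  congr 1
  rw [intervalIntegral.integral_of_le ht]
  have hint : Integrable (fun s => exp ((-s) • L) (g s)) (volume.restrict (Set.Ioc 0 t)) :=
    hcont.integrableOn_Ioc
  rw [← ContinuousLinearMap.integral_comp_comm _ hint]
  apply setIntegral_congr_fun measurableSet_Ioc
  intro s _
  show (exp (t • L)) ((exp ((-s) • L)) (g s)) = (exp ((t - s) • L)) (g s)
  have e : (t - s) = t + (-s) := by ring
  rw [e, expL_add]
  rfl

end Sol

lemma eq_zero_of_setIntegral_zero {g : ℝ → ℝ} (hg : Continuous g) (h0 : ∀ s, 0 ≤ g s) {T : ℝ}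
    (hint : (∫ s in Set.Ioc 0 T, g s) = 0) : ∀ s ∈ Set.Ioo (0:ℝ) T, g s = 0 := by
  intro s hs
  by_contra hne
  have hInt : MeasureTheory.IntegrableOn g (Set.Ioc 0 T) := hg.integrableOn_Ioc
  have hae : g =ᵐ[volume.restrict (Set.Ioc 0 T)] 0 :=
    (MeasureTheory.integral_eq_zero_iff_of_nonneg h0 hInt).mp hint
  have hnull : volume.restrict (Set.Ioc 0 T) {x | g x ≠ 0} = 0 := by
    rw [Filter.EventuallyEq, MeasureTheory.ae_iff] at hae
    simpa using hae
  have hopen : IsOpen {x : ℝ | g x ≠ 0} := isOpen_compl_singleton.preimage hg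
  obtain ⟨ε, hε, hball⟩ : ∃ ε > 0, Metric.ball s ε ⊆ {x | g x ≠ 0} :=
    Metric.mem_nhds_iff.1 (hopen.mem_nhds hne)
  set a := max 0 (s - ε) with ha
  set b := min T (s + ε) with hb
  have hab : a < b := by
    apply max_lt (lt_min (lt_trans hs.1 hs.2) (by linarith [hs.1]))
      (lt_min (by linarith [hs.2]) (by linarith))
  have hsub : Set.Ioo a b ⊆ {x | g x ≠ 0} ∩ Set.Ioc 0 T := by
    intro x hx
    constructor
    · apply hball
      rw [Metric.mem_ball, Real.dist_eq, abs_sub_lt_iff]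
      constructor
      · have : x < s + ε := lt_of_lt_of_le hx.2 (min_le_right _ _); linarith
      · have : s - ε < x := lt_of_le_of_lt (le_max_right 0 (s - ε)) hx.1; linarith
    · exact ⟨lt_of_le_of_lt (le_max_left 0 (s - ε)) hx.1,
        le_trans (le_of_lt hx.2) (min_le_left _ _)⟩
  have hpos : (0 : ENNReal) < volume (Set.Ioo a b) := by
    rw [Real.volume_Ioo]
    exact ENNReal.ofReal_pos.2 (by linarith)
  have hle : volume (Set.Ioo a b) ≤ volume.restrict (Set.Ioc 0 T) {x | g x ≠ 0} := by
    rw [MeasureTheory.Measure.restrict_apply (hopen.measurableSet)]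
    exact measure_mono hsub
  rw [hnull] at hle
  exact (ne_of_gt hpos) (le_antisymm hle zero_le)

lemma dp_swap {a b : Type*} [Fintype a] [Fintype b] (P : Matrix a b ℝ) (u : b → ℝ) (w : a → ℝ) :
    (P *ᵥ u) ⬝ᵥ w = u ⬝ᵥ (Pᵀ *ᵥ w) := by
  rw [dotProduct_comm, dotProduct_mulVec, mulVec_transpose, dotProduct_comm]

lemma dp_swap' {a b : Type*} [Fintype a] [Fintype b] (P : Matrix a b ℝ) (v : a → ℝ) (x : b → ℝ) :
    v ⬝ᵥ (P *ᵥ x) = (Pᵀ *ᵥ v) ⬝ᵥ x := by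
  rw [dotProduct_comm, dp_swap, dotProduct_comm]

noncomputable def dotCLM (v : ι → ℝ) : (ι → ℝ) →L[ℝ] ℝ :=
  LinearMap.toContinuousLinearMap
    { toFun := fun w => v ⬝ᵥ w
      map_add' := fun a b => by simp [dotProduct_add]
      map_smul' := fun c a => by simp [dotProduct_smul, smul_eq_mul] }

@[simp] lemma dotCLM_apply (v w : ι → ℝ) : dotCLM v w = v ⬝ᵥ w := rfl

end MemProofAux

namespace MemProofAux

variable {n m : ℕ}

noncomputable def bA (A M : Matrix (Fin n) (Fin n) ℝ) :
    Matrix (Fin n ⊕ Fin n) (Fin n ⊕ Fin n) ℝ := Matrix.fromBlocks A M 1 0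

noncomputable def bB (B : Matrix (Fin n) (Fin m) ℝ) :
    Matrix (Fin n ⊕ Fin n) (Fin m) ℝ := Matrix.fromRows B 0

lemma bB_mulVec (B : Matrix (Fin n) (Fin m) ℝ) (x : Fin m → ℝ) :
    bB B *ᵥ x = Sum.elim (B *ᵥ x) 0 := by
  rw [bB, Matrix.fromRows_mulVec, Matrix.zero_mulVec]

lemma amcSeq_snd (A M : Matrix (Fin n) (Fin n) ℝ) (i : ℕ) :
    (amcSeq A M i).2 = M * AmatC A M i := by
  cases i with
  | zero => simp [amcSeq, AmatC]
  | succ j => simp [amcSeq, AmatC]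

lemma bA_pow_mulVec (A M : Matrix (Fin n) (Fin n) ℝ) (B : Matrix (Fin n) (Fin m) ℝ)
    (i : ℕ) (x : Fin m → ℝ) :
    (bA A M ^ (i + 1)) *ᵥ (bB B *ᵥ x) =
      Sum.elim (AmatC A M (i + 1) *ᵥ (B *ᵥ x)) (AmatC A M i *ᵥ (B *ᵥ x)) := by
  induction i with
  | zero =>
    rw [pow_one, bB_mulVec, bA, Matrix.fromBlocks_mulVec]
    have h1 : (Sum.elim (B *ᵥ x) (0 : Fin n → ℝ)) ∘ Sum.inl = B *ᵥ x := rfl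
    have h2 : (Sum.elim (B *ᵥ x) (0 : Fin n → ℝ)) ∘ Sum.inr = 0 := rfl
    rw [h1, h2]
    simp [AmatC, amcSeq, Matrix.mulVec_zero, Matrix.one_mulVec]
  | succ j ih =>
    have hp : bA A M ^ (j + 1 + 1) = bA A M * bA A M ^ (j + 1) := by
      rw [← pow_succ']
    rw [hp, ← Matrix.mulVec_mulVec, ih, bA, Matrix.fromBlocks_mulVec]
    have h1 : (Sum.elim (AmatC A M (j + 1) *ᵥ (B *ᵥ x)) (AmatC A M j *ᵥ (B *ᵥ x))) ∘ Sum.inl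
        = AmatC A M (j + 1) *ᵥ (B *ᵥ x) := rfl
    have h2 : (Sum.elim (AmatC A M (j + 1) *ᵥ (B *ᵥ x)) (AmatC A M j *ᵥ (B *ᵥ x))) ∘ Sum.inr
        = AmatC A M j *ᵥ (B *ᵥ x) := rfl
    rw [h1, h2]
    have hA2 : A * AmatC A M (j + 1) + M * AmatC A M j = AmatC A M (j + 2) := by
      rw [← amcSeq_snd]
      show A * (amcSeq A M j).1 + (amcSeq A M j).2 = (amcSeq A M (j + 1)).1
      simp [amcSeq]
    rw [Matrix.mulVec_mulVec (B *ᵥ x) A (AmatC A M (j + 1)),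
      Matrix.mulVec_mulVec (B *ᵥ x) M (AmatC A M j), ← Matrix.add_mulVec, hA2,
      Matrix.one_mulVec, Matrix.zero_mulVec, add_zero]

end MemProofAux

namespace MemProofAux

variable {n m : ℕ}

section Gram

variable (A M : Matrix (Fin n) (Fin n) ℝ) (B : Matrix (Fin n) (Fin m) ℝ) (T : ℝ)

noncomputable def aC : ((Fin n ⊕ Fin n) → ℝ) →L[ℝ] ((Fin n ⊕ Fin n) → ℝ) := matCLM (bA A M)

noncomputable def atC : ((Fin n ⊕ Fin n) → ℝ) →L[ℝ] ((Fin n ⊕ Fin n) → ℝ) := matCLM (bA A M)ᵀ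

noncomputable def bC : (Fin m → ℝ) →L[ℝ] ((Fin n ⊕ Fin n) → ℝ) :=
  LinearMap.toContinuousLinearMap (bB B).mulVecLin

noncomputable def btC : ((Fin n ⊕ Fin n) → ℝ) →L[ℝ] (Fin m → ℝ) :=
  LinearMap.toContinuousLinearMap ((bB B)ᵀ).mulVecLin

@[simp] lemma bC_apply (x : Fin m → ℝ) : bC B x = bB B *ᵥ x := rfl
@[simp] lemma btC_apply (w : (Fin n ⊕ Fin n) → ℝ) : btC B w = (bB B)ᵀ *ᵥ w := rfl

noncomputable def gramF (s : ℝ) :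
    ((Fin n ⊕ Fin n) → ℝ) →L[ℝ] ((Fin n ⊕ Fin n) → ℝ) :=
  (exp ((T - s) • aC A M)).comp ((bC B).comp ((btC B).comp (exp ((T - s) • atC A M))))

lemma continuous_gramF : Continuous (gramF A M B T) := by
  apply Continuous.clm_comp
  · exact (continuous_expL _).comp (continuous_const.sub continuous_id)
  · apply Continuous.clm_comp continuous_const
    apply Continuous.clm_comp continuous_const
    exact (continuous_expL _).comp (continuous_const.sub continuous_id)

noncomputable def gram : ((Fin n ⊕ Fin n) → ℝ) →L[ℝ] ((Fin n ⊕ Fin n) → ℝ) :=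
  ∫ s in (0:ℝ)..T, gramF A M B T s

lemma gram_apply (ht : 0 ≤ T) (v : (Fin n ⊕ Fin n) → ℝ) :
    gram A M B T v = ∫ s in Set.Ioc 0 T, gramF A M B T s v := by
  rw [gram, intervalIntegral.integral_of_le ht,
    ContinuousLinearMap.integral_apply ((continuous_gramF A M B T).integrableOn_Ioc)]

lemma dot_gramF (s : ℝ) (v : (Fin n ⊕ Fin n) → ℝ) :
    v ⬝ᵥ (gramF A M B T s v)
      = (btC B (exp ((T - s) • atC A M) v)) ⬝ᵥ (btC B (exp ((T - s) • atC A M) v)) := by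
  have h2 : (exp ((T - s) • bA A M))ᵀ *ᵥ v = exp ((T - s) • atC A M) v := by
    rw [atC, exp_matCLM_apply, ← Matrix.transpose_smul, Matrix.exp_transpose]
  have h1 : gramF A M B T s v
      = exp ((T - s) • bA A M) *ᵥ (bB B *ᵥ (btC B (exp ((T - s) • atC A M) v))) := by
    show exp ((T - s) • aC A M) (bC B (btC B (exp ((T - s) • atC A M) v))) = _
    rw [bC_apply, aC, exp_matCLM_apply]
  rw [h1, dp_swap', dp_swap', h2, btC_apply]

end Gram

end MemProofAux

namespace MemProofAux

variable {n m : ℕ}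

lemma gram_inj (A M : Matrix (Fin n) (Fin n) ℝ) (B : Matrix (Fin n) (Fin m) ℝ) {T : ℝ}
    (hT : 0 < T)
    (hrank : Submodule.span ℝ
      { v : (Fin n → ℝ) × (Fin n → ℝ) |
        (∃ x : Fin m → ℝ, v = (B *ᵥ x, 0)) ∨
        ∃ (i : ℕ) (x : Fin m → ℝ), 1 ≤ i ∧ i ≤ 2 * n + 1 ∧
          v = (AmatC A M i *ᵥ (B *ᵥ x), AmatC A M (i - 1) *ᵥ (B *ᵥ x)) } = ⊤)
    (v : (Fin n ⊕ Fin n) → ℝ) (hv : gram A M B T v = 0) : v = 0 := by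
  classical
  set w : ℝ → (Fin m → ℝ) := fun s => btC B (exp ((T - s) • atC A M) v) with hwdef
  have hcontw : Continuous w := (btC B).continuous.comp
    ((((continuous_expL (atC A M)).comp (continuous_const.sub continuous_id)).clm_apply
      continuous_const))
  have hq : Continuous fun s => w s ⬝ᵥ w s := by
    have : (fun s => w s ⬝ᵥ w s) = fun s => ∑ i, w s i * w s i := rfl
    rw [this]
    exact continuous_finset_sum _ fun i _ =>
      ((continuous_apply i).comp hcontw).mul ((continuous_apply i).comp hcontw)
  have hqnn : ∀ s, 0 ≤ w s ⬝ᵥ w s := fun s => Finset.sum_nonneg fun i _ => mul_self_nonneg _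
  have hint0 : (∫ s in Set.Ioc 0 T, w s ⬝ᵥ w s) = 0 := by
    have hcongr : ∀ s ∈ Set.Ioc (0:ℝ) T, w s ⬝ᵥ w s = (dotCLM v) (gramF A M B T s v) :=
      fun s _ => (dot_gramF A M B T s v).symm
    rw [setIntegral_congr_fun measurableSet_Ioc hcongr]
    have hInt : Integrable (fun s => gramF A M B T s v) (volume.restrict (Set.Ioc 0 T)) :=
      (Continuous.clm_apply (continuous_gramF A M B T) continuous_const).integrableOn_Ioc
    rw [ContinuousLinearMap.integral_comp_comm _ hInt, ← gram_apply A M B T (le_of_lt hT), hv]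
    simp
  have hw0 : ∀ s ∈ Set.Ioo (0:ℝ) T, w s = 0 := by
    intro s hs
    exact dotProduct_self_eq_zero.mp (eq_zero_of_setIntegral_zero hq hqnn hint0 s hs)
  have hkey : ∀ k : ℕ, ∀ r ∈ Set.Ioo (0:ℝ) T,
      btC B ((atC A M ^ k) (exp (r • atC A M) v)) = 0 := by
    intro k
    induction k with
    | zero =>
      intro r hr
      have h : btC B (exp ((T - (T - r)) • atC A M) v) = 0 :=
        hw0 (T - r) ⟨by linarith [hr.2], by linarith [hr.1]⟩
      rw [show T - (T - r) = r by ring] at h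
      rw [pow_zero, ContinuousLinearMap.one_apply]
      exact h
    | succ k ih =>
      intro r hr
      set Lk : (((Fin n ⊕ Fin n) → ℝ) →L[ℝ] ((Fin n ⊕ Fin n) → ℝ)) →L[ℝ] (Fin m → ℝ) :=
        ((btC B).comp (atC A M ^ k)).comp
          (ContinuousLinearMap.apply ℝ ((Fin n ⊕ Fin n) → ℝ) v) with hLk
      have hLk_apply : ∀ Y : ((Fin n ⊕ Fin n) → ℝ) →L[ℝ] ((Fin n ⊕ Fin n) → ℝ),
          Lk Y = btC B ((atC A M ^ k) (Y v)) := fun Y => rfl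
      have hder : HasDerivAt (fun r : ℝ => Lk (exp (r • atC A M)))
          (Lk (exp (r • atC A M) * atC A M)) r :=
        Lk.hasFDerivAt.comp_hasDerivAt r (hasDerivAt_expL (atC A M) r)
      have hev : (fun _ : ℝ => (0 : Fin m → ℝ)) =ᶠ[nhds r]
          (fun r : ℝ => Lk (exp (r • atC A M))) := by
        filter_upwards [Ioo_mem_nhds hr.1 hr.2] with x hx
        rw [hLk_apply]
        exact (ih x hx).symm
      have hz : HasDerivAt (fun _ : ℝ => (0 : Fin m → ℝ))
          (Lk (exp (r • atC A M) * atC A M)) r :=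
        hder.congr_of_eventuallyEq hev
      have h0 : Lk (exp (r • atC A M) * atC A M) = 0 :=
        ((hasDerivAt_const r (0 : Fin m → ℝ)).unique hz).symm
      have hcom : exp (r • atC A M) * atC A M = atC A M * exp (r • atC A M) :=
        ((commute_expL (atC A M) r).eq).symm
      rw [hcom, hLk_apply] at h0
      rw [ContinuousLinearMap.mul_apply] at h0
      have : (atC A M ^ k) ((atC A M) (exp (r • atC A M) v))
          = (atC A M ^ (k + 1)) (exp (r • atC A M) v) := by
        rw [pow_succ]
        rfl
      rw [this] at h0
      exact h0
  -- specialize at T/2 and convert to matrix form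
  set wv : (Fin n ⊕ Fin n) → ℝ := exp ((T/2 : ℝ) • atC A M) v with hwv
  have hbk : ∀ k : ℕ, (bB B)ᵀ *ᵥ (((bA A M)ᵀ ^ k) *ᵥ wv) = 0 := by
    intro k
    have h := hkey k (T/2) ⟨half_pos hT, half_lt_self hT⟩
    have hp : (atC A M) ^ k = matCLM ((bA A M)ᵀ ^ k) := by
      rw [atC, ← map_pow]
    rw [hp, ← hwv, btC_apply, matCLM_apply] at h
    exact h
  -- each vector of the spanning set is orthogonal to wv
  have hS : ∀ p ∈ { v : (Fin n → ℝ) × (Fin n → ℝ) |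
        (∃ x : Fin m → ℝ, v = (B *ᵥ x, 0)) ∨
        ∃ (i : ℕ) (x : Fin m → ℝ), 1 ≤ i ∧ i ≤ 2 * n + 1 ∧
          v = (AmatC A M i *ᵥ (B *ᵥ x), AmatC A M (i - 1) *ᵥ (B *ᵥ x)) },
      (Sum.elim p.1 p.2) ⬝ᵥ wv = 0 := by
    rintro p (⟨x, rfl⟩ | ⟨i, x, hi1, _, rfl⟩)
    · show (Sum.elim (B *ᵥ x) 0) ⬝ᵥ wv = 0
      rw [← bB_mulVec, dp_swap]
      have := hbk 0
      rw [pow_zero, Matrix.one_mulVec] at this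
      rw [this, dotProduct_zero]
    · obtain ⟨j, rfl⟩ : ∃ j, i = j + 1 := ⟨i - 1, by omega⟩
      show (Sum.elim (AmatC A M (j + 1) *ᵥ (B *ᵥ x)) (AmatC A M (j + 1 - 1) *ᵥ (B *ᵥ x))) ⬝ᵥ wv = 0
      have hj : j + 1 - 1 = j := rfl
      rw [hj, ← bA_pow_mulVec, dp_swap, Matrix.transpose_pow, dp_swap]
      rw [hbk (j + 1), dotProduct_zero]
  -- linear functional argument
  let φ : ((Fin n → ℝ) × (Fin n → ℝ)) →ₗ[ℝ] ℝ :=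
    { toFun := fun p => Sum.elim p.1 p.2 ⬝ᵥ wv
      map_add' := fun p q => by
        have he : Sum.elim (p + q).1 (p + q).2 = Sum.elim p.1 p.2 + Sum.elim q.1 q.2 := by
          funext j; cases j <;> rfl
        show (Sum.elim (p + q).1 (p + q).2) ⬝ᵥ wv
          = (Sum.elim p.1 p.2) ⬝ᵥ wv + (Sum.elim q.1 q.2) ⬝ᵥ wv
        rw [he, add_dotProduct]
      map_smul' := fun c p => by
        have he : Sum.elim (c • p).1 (c • p).2 = c • Sum.elim p.1 p.2 := by
          funext j; cases j <;> rfl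
        show (Sum.elim (c • p).1 (c • p).2) ⬝ᵥ wv = c • ((Sum.elim p.1 p.2) ⬝ᵥ wv)
        rw [he, smul_dotProduct] }
  have hsub : Submodule.span ℝ
      { v : (Fin n → ℝ) × (Fin n → ℝ) |
        (∃ x : Fin m → ℝ, v = (B *ᵥ x, 0)) ∨
        ∃ (i : ℕ) (x : Fin m → ℝ), 1 ≤ i ∧ i ≤ 2 * n + 1 ∧
          v = (AmatC A M i *ᵥ (B *ᵥ x), AmatC A M (i - 1) *ᵥ (B *ᵥ x)) } ≤ LinearMap.ker φ :=
    Submodule.span_le.mpr fun p hp => hS p hp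
  rw [hrank] at hsub
  have hwv0 : wv = 0 := by
    have h := hsub (Submodule.mem_top (x := ((fun i => wv (Sum.inl i)), fun i => wv (Sum.inr i))))
    have he : Sum.elim (fun i => wv (Sum.inl i)) (fun i => wv (Sum.inr i)) = wv := by
      funext j; cases j <;> rfl
    have : wv ⬝ᵥ wv = 0 := by
      have := LinearMap.mem_ker.mp h
      rwa [show φ ((fun i => wv (Sum.inl i)), fun i => wv (Sum.inr i))
        = Sum.elim (fun i => wv (Sum.inl i)) (fun i => wv (Sum.inr i)) ⬝ᵥ wv from rfl, he] at this
    exact dotProduct_self_eq_zero.mp this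
  -- conclude v = 0
  have hvv : exp ((-(T/2) : ℝ) • atC A M) wv = v := by
    rw [hwv]
    have : exp ((-(T/2) : ℝ) • atC A M) (exp ((T/2 : ℝ) • atC A M) v)
        = (exp ((-(T/2) : ℝ) • atC A M) * exp ((T/2 : ℝ) • atC A M)) v := rfl
    rw [this, ← expL_add]
    norm_num [NormedSpace.exp_zero]
  rw [hwv0, map_zero] at hvv
  exact hvv.symm

end MemProofAux


/-- Theorem 3.3 (iii), sufficiency: for constant kernels, the rank
condition `rank [[B, A₁B, …, A_{2n+1}B], [0, B, …, A_{2n}B]] = 2n` implies memory-type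
null controllability with kernel `M̃`. -/
theorem rank_condition_constant_implies_memory_null_controllable
    (T : ℝ) (hT : 0 < T) (n m : ℕ)
    (A M Mt : Matrix (Fin n) (Fin n) ℝ)
    (B : Matrix (Fin n) (Fin m) ℝ)
    (hrank : Submodule.span ℝ
      { v : (Fin n → ℝ) × (Fin n → ℝ) |
        (∃ x : Fin m → ℝ, v = (B *ᵥ x, 0)) ∨
        ∃ (i : ℕ) (x : Fin m → ℝ), 1 ≤ i ∧ i ≤ 2 * n + 1 ∧
          v = (AmatC A M i *ᵥ (B *ᵥ x), AmatC A M (i - 1) *ᵥ (B *ᵥ x)) } = ⊤) :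
    MemNullCtrl T n m A (fun _ => M) (fun _ => Mt) B := by
  classical
  open MemProofAux in
  intro y0
  have hT' : (0:ℝ) ≤ T := le_of_lt hT
  -- surjectivity of the Gramian
  have hinj : Function.Injective ((MemProofAux.gram A M B T).toLinearMap) := by
    intro v1 v2 h
    have h2 : MemProofAux.gram A M B T (v1 - v2) = 0 := by
      rw [map_sub]
      show MemProofAux.gram A M B T v1 - MemProofAux.gram A M B T v2 = 0
      rw [show (MemProofAux.gram A M B T) v1 = (MemProofAux.gram A M B T).toLinearMap v1 from rfl,
        show (MemProofAux.gram A M B T) v2 = (MemProofAux.gram A M B T).toLinearMap v2 from rfl,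
        h, sub_self]
    exact sub_eq_zero.mp (MemProofAux.gram_inj A M B hT hrank _ h2)
  have hsurj : Function.Surjective (MemProofAux.gram A M B T) :=
    LinearMap.injective_iff_surjective.mp hinj
  set X0 : (Fin n ⊕ Fin n) → ℝ := Sum.elim y0 0 with hX0
  obtain ⟨v, hv⟩ := hsurj (-(exp (T • MemProofAux.aC A M) X0))
  set u : ℝ → Fin m → ℝ :=
    fun s => MemProofAux.btC B (exp ((T - s) • MemProofAux.atC A M) v) with hu
  have hucont : Continuous u := (MemProofAux.btC B).continuous.comp
    (((MemProofAux.continuous_expL _).comp (continuous_const.sub continuous_id)).clm_apply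
      continuous_const)
  set g : ℝ → (Fin n ⊕ Fin n) → ℝ := fun s => MemProofAux.bC B (u s) with hgdef
  have hgcont : Continuous g := (MemProofAux.bC B).continuous.comp hucont
  set X := MemProofAux.solX (MemProofAux.aC A M) g X0 with hXdef
  have hXcont : Continuous X := MemProofAux.solX_continuous (MemProofAux.aC A M) X0 hgcont
  set y : ℝ → Fin n → ℝ := fun t => X t ∘ Sum.inl with hydef
  set z : ℝ → Fin n → ℝ := fun t => X t ∘ Sum.inr with hzdef
  have hycont : Continuous y := by
    apply continuous_pi
    intro i
    exact (continuous_apply (Sum.inl i)).comp hXcont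
  -- X T = 0
  have hXT : X T = 0 := by
    rw [hXdef, MemProofAux.solX_formula _ _ hgcont hT']
    have hgram : (∫ s in Set.Ioc 0 T, exp ((T - s) • MemProofAux.aC A M) (g s))
        = MemProofAux.gram A M B T v := by
      rw [MemProofAux.gram_apply A M B T hT']
      apply setIntegral_congr_fun measurableSet_Ioc
      intro s _
      rfl
    rw [hgram, hv]
    simp
  -- integrated equation
  have hintg : Continuous fun s => MemProofAux.aC A M (X s) + g s :=
    ((MemProofAux.aC A M).continuous.comp hXcont).add hgcont
  have hXeq : ∀ t ∈ Set.Icc (0:ℝ) T,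
      X t = X0 + ∫ s in Set.Ioc 0 t, (MemProofAux.aC A M (X s) + g s) := by
    intro t ht
    rw [hXdef, MemProofAux.solX_integral _ _ hgcont t, intervalIntegral.integral_of_le ht.1]
  -- component identities
  have e1 : ∀ s : ℝ, MemProofAux.aC A M (X s) = Sum.elim (A *ᵥ y s + M *ᵥ z s) (y s) := by
    intro s
    show MemProofAux.matCLM (MemProofAux.bA A M) (X s) = _
    rw [MemProofAux.matCLM_apply, MemProofAux.bA, Matrix.fromBlocks_mulVec,
      Matrix.one_mulVec, Matrix.zero_mulVec, add_zero]
  have e2 : ∀ s : ℝ, g s = Sum.elim (B *ᵥ u s) 0 := by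
    intro s
    show MemProofAux.bC B (u s) = _
    rw [MemProofAux.bC_apply, MemProofAux.bB_mulVec]
  have hzeq : ∀ t ∈ Set.Icc (0:ℝ) T, z t = ∫ s in Set.Ioc 0 t, y s := by
    intro t ht
    have h := hXeq t ht
    have happ : z t = LinearMap.toContinuousLinearMap (LinearMap.funLeft ℝ ℝ
        (Sum.inr : Fin n → Fin n ⊕ Fin n)) (X t) := rfl
    rw [happ, h, map_add, ← ContinuousLinearMap.integral_comp_comm _ hintg.integrableOn_Ioc]
    have h0 : LinearMap.toContinuousLinearMap (LinearMap.funLeft ℝ ℝ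
        (Sum.inr : Fin n → Fin n ⊕ Fin n)) X0 = 0 := rfl
    rw [h0, zero_add]
    apply setIntegral_congr_fun measurableSet_Ioc
    intro s _
    show (MemProofAux.aC A M (X s) + g s) ∘ Sum.inr = y s
    rw [e1, e2]
    funext i
    simp [Function.comp_apply]
  have hyeq : ∀ t ∈ Set.Icc (0:ℝ) T,
      y t = y0 + ∫ s in Set.Ioc 0 t, (A *ᵥ y s + M *ᵥ z s + B *ᵥ u s) := by
    intro t ht
    have h := hXeq t ht
    have happ : y t = LinearMap.toContinuousLinearMap (LinearMap.funLeft ℝ ℝ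
        (Sum.inl : Fin n → Fin n ⊕ Fin n)) (X t) := rfl
    rw [happ, h, map_add, ← ContinuousLinearMap.integral_comp_comm _ hintg.integrableOn_Ioc]
    have h0 : LinearMap.toContinuousLinearMap (LinearMap.funLeft ℝ ℝ
        (Sum.inl : Fin n → Fin n ⊕ Fin n)) X0 = y0 := rfl
    rw [h0]
    congr 1
    apply setIntegral_congr_fun measurableSet_Ioc
    intro s _
    show (MemProofAux.aC A M (X s) + g s) ∘ Sum.inl = A *ᵥ y s + M *ᵥ z s + B *ᵥ u s
    rw [e1, e2]
    funext i
    simp [Function.comp_apply]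
  -- the memory equation
  have hctrl : ∀ t ∈ Set.Icc (0:ℝ) T,
      y t = y0 + ∫ s in Set.Ioc 0 t,
        (A *ᵥ y s + (∫ r in Set.Ioc 0 s, M *ᵥ y r) + B *ᵥ u s) := by
    intro t ht
    rw [hyeq t ht]
    congr 1
    apply setIntegral_congr_fun measurableSet_Ioc
    intro s hs
    have hsIcc : s ∈ Set.Icc (0:ℝ) T := ⟨le_of_lt hs.1, le_trans hs.2 ht.2⟩
    show A *ᵥ y s + M *ᵥ z s + B *ᵥ u s
      = A *ᵥ y s + (∫ r in Set.Ioc 0 s, M *ᵥ y r) + B *ᵥ u s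
    rw [hzeq s hsIcc]
    have hM : M *ᵥ (∫ r in Set.Ioc 0 s, y r) = ∫ r in Set.Ioc 0 s, M *ᵥ y r := by
      rw [show (M *ᵥ (∫ r in Set.Ioc 0 s, y r))
          = LinearMap.toContinuousLinearMap M.mulVecLin (∫ r in Set.Ioc 0 s, y r) from rfl,
        ← ContinuousLinearMap.integral_comp_comm _ hycont.integrableOn_Ioc]
      rfl
    rw [hM]
  -- final data
  have hyT : y T = 0 := by
    rw [hydef]
    show X T ∘ Sum.inl = 0
    rw [hXT]
    rfl
  have hzT : (∫ s in Set.Ioc 0 T, y s) = 0 := by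
    rw [← hzeq T ⟨hT', le_refl T⟩, hzdef]
    show X T ∘ Sum.inr = 0
    rw [hXT]
    rfl
  have hMt : (∫ s in Set.Ioc 0 T, Mt *ᵥ y s) = 0 := by
    have h : (∫ s in Set.Ioc 0 T, Mt *ᵥ y s) = Mt *ᵥ (∫ s in Set.Ioc 0 T, y s) := by
      rw [show (Mt *ᵥ (∫ s in Set.Ioc 0 T, y s))
          = LinearMap.toContinuousLinearMap Mt.mulVecLin (∫ s in Set.Ioc 0 T, y s) from rfl,
        ← ContinuousLinearMap.integral_comp_comm _ hycont.integrableOn_Ioc]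
      rfl
    rw [h, hzT, Matrix.mulVec_zero]
  -- MemLp
  haveI : IsFiniteMeasure (volume.restrict (Set.Ioc (0:ℝ) T)) :=
    ⟨by rw [Measure.restrict_apply_univ]; exact measure_Ioc_lt_top⟩
  have hmem : MemLp u 2 (volume.restrict (Set.Ioc 0 T)) := by
    obtain ⟨C, hC⟩ := (isCompact_Icc (a := (0:ℝ)) (b := T)).exists_bound_of_continuousOn
      hucont.continuousOn
    apply MemLp.of_bound hucont.aestronglyMeasurable C
    filter_upwards [ae_restrict_mem measurableSet_Ioc] with x hx
    exact hC x (Set.Ioc_subset_Icc_self hx)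
  exact ⟨u, y, hmem, ⟨hycont.continuousOn, fun t ht => hctrl t ht⟩, hyT, hMt⟩
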